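/- Closure under causal equivalence: Let T, S be two recursive causal teams (resp. two recursive generalized causal teams) over σ with T ≈ S. Then for every formula φ of CO⩗[σ] or COD[σ]: T ⊨ φ if and only if S ⊨ φ. -/

import Mathlib

open scoped Classical
set_option linter.unusedSectionVars false

noncomputable section

/-- Assignments of values to variables. -/
abbrev Asg (V : Type) (Val : V → Type) : Type := (v : V) → Val v

/-- A recursive system of functions over the signature `(V, Val)`:
each endogenous variable `v ∈ En` has a parent set `pa v` and a function `fn v`
computing its value from the values of its parents; recursiveness says that the
induced causal graph is acyclic. -/
structure Sys (V : Type) (Val : V → Type) : Type where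
  En : Finset V
  pa : V → Finset V
  fn : (v : V) → ((w : V) → w ∈ pa v → Val w) → Val v
  recursive : ∀ x : V, ¬ Relation.TransGen (fun a b => b ∈ En ∧ a ∈ pa b) x x

variable {V : Type} [Fintype V] [DecidableEq V] [Nonempty V]
  {Val : V → Type} [∀ v, Fintype (Val v)] [∀ v, DecidableEq (Val v)] [∀ v, Nonempty (Val v)]

namespace CausalTeam

/-- The edge relation of the causal graph of a system of functions. -/
@[reducible] def Edge (F : Sys V Val) (a b : V) : Prop := b ∈ F.En ∧ a ∈ F.pa b

theorem wfEdge (F : Sys V Val) : WellFounded (Edge F) := by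
  have h2 : WellFounded (Relation.TransGen (Edge F)) := by
    have hirr : IsIrrefl V (Relation.TransGen (Edge F)) := ⟨F.recursive⟩
    have htr : IsTrans V (Relation.TransGen (Edge F)) :=
      ⟨fun _ _ _ h h' => Relation.TransGen.trans h h'⟩
    exact Finite.wellFounded_of_trans_of_irrefl _
  exact Subrelation.wf (fun h => Relation.TransGen.single h) h2

/-- An assignment is compatible with a system of functions if every endogenous
variable takes the value prescribed by its function. -/
def Compat (F : Sys V Val) (s : Asg V Val) : Prop :=
  ∀ v ∈ F.En, s v = F.fn v (fun w _ => s w)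

/-- The variables occurring in a conjunction of equations `𝐗 = 𝐱`. -/
def ikeys (I : List ((v : V) × Val v)) : List V := I.map Sigma.fst

/-- A conjunction of equations is consistent if it contains no pair `X = x`, `X = x'`
with distinct values `x ≠ x'`. -/
def IConsistent (I : List ((v : V) × Val v)) : Prop :=
  ∀ p ∈ I, ∀ q ∈ I, p.1 = q.1 → p = q

/-- Look up the (first) value assigned to a variable by a conjunction of equations. -/
def ilookup : List ((v : V) × Val v) → (v : V) → Option (Val v)
  | [], _ => none
  | p :: I, v => if h : p.1 = v then some (h ▸ p.2) else ilookup I v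

/-- The intervened system of functions `F_{𝐗=𝐱}`: the restriction of `F` to `En(F) ∖ 𝐗`. -/
def doSys (F : Sys V Val) (I : List ((v : V) × Val v)) : Sys V Val where
  En := F.En.filter (fun v => v ∉ ikeys I)
  pa := F.pa
  fn := F.fn
  recursive := by
    intro x hx
    refine F.recursive x (Relation.TransGen.mono (fun a b hab => ?_) x x hx)
    exact ⟨(Finset.mem_filter.mp hab.1).1, hab.2⟩

/-- The intervened assignment `s_{𝐗=𝐱}`: variables in `𝐗` get the prescribed values,
exogenous variables outside `𝐗` keep their values, and endogenous variables outside `𝐗`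
are recomputed (recursively) by their functions. -/
def doAsg (F : Sys V Val) (I : List ((v : V) × Val v)) (s : Asg V Val) : Asg V Val :=
  (wfEdge F).fix (C := fun v => Val v) fun v ih =>
    match ilookup I v with
    | some x => x
    | none => if h : v ∈ F.En then F.fn v (fun w hw => ih w ⟨h, hw⟩) else s v

/-- Formulas of the languages CO[σ], CO⩗[σ] and COD[σ]:
equations `X = x`, dependence atoms `=(𝐗;Y)`, negation, conjunction,
tensor disjunction `∨`, intuitionistic disjunction `⩗`, and counterfactuals `𝐗=𝐱 □→ φ`. -/
inductive Fml (V : Type) (Val : V → Type) : Type where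
  | eq : (v : V) → Val v → Fml V Val
  | dep : List V → V → Fml V Val
  | neg : Fml V Val → Fml V Val
  | and : Fml V Val → Fml V Val → Fml V Val
  | or : Fml V Val → Fml V Val → Fml V Val
  | ior : Fml V Val → Fml V Val → Fml V Val
  | cf : List ((v : V) × Val v) → Fml V Val → Fml V Val

/-- CO[σ]-formulas: equations, closed under ¬, ∧, ∨ and counterfactuals. -/
inductive IsCO : Fml V Val → Prop where
  | eq (v : V) (x : Val v) : IsCO (Fml.eq v x)
  | neg {φ} : IsCO φ → IsCO (Fml.neg φ)
  | and {φ ψ} : IsCO φ → IsCO ψ → IsCO (Fml.and φ ψ)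
  | or {φ ψ} : IsCO φ → IsCO ψ → IsCO (Fml.or φ ψ)
  | cf {φ} (I : List ((v : V) × Val v)) : IsCO φ → IsCO (Fml.cf I φ)

/-- CO⩗[σ]-formulas: additionally closed under ⩗; negation applies to CO-formulas only. -/
inductive IsCOV : Fml V Val → Prop where
  | eq (v : V) (x : Val v) : IsCOV (Fml.eq v x)
  | neg {φ} : IsCO φ → IsCOV (Fml.neg φ)
  | and {φ ψ} : IsCOV φ → IsCOV ψ → IsCOV (Fml.and φ ψ)
  | or {φ ψ} : IsCOV φ → IsCOV ψ → IsCOV (Fml.or φ ψ)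
  | ior {φ ψ} : IsCOV φ → IsCOV ψ → IsCOV (Fml.ior φ ψ)
  | cf {φ} (I : List ((v : V) × Val v)) : IsCOV φ → IsCOV (Fml.cf I φ)

/-- COD[σ]-formulas: additionally allow dependence atoms; negation applies to
CO-formulas only. -/
inductive IsCOD : Fml V Val → Prop where
  | eq (v : V) (x : Val v) : IsCOD (Fml.eq v x)
  | dep (X : List V) (Y : V) : IsCOD (Fml.dep X Y)
  | neg {φ} : IsCO φ → IsCOD (Fml.neg φ)
  | and {φ ψ} : IsCOD φ → IsCOD ψ → IsCOD (Fml.and φ ψ)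
  | or {φ ψ} : IsCOD φ → IsCOD ψ → IsCOD (Fml.or φ ψ)
  | cf {φ} (I : List ((v : V) × Val v)) : IsCOD φ → IsCOD (Fml.cf I φ)

/-- Satisfaction over causal teams `(Tm, F)` (the causal team semantics `⊨^c`). -/
def satC : Set (Asg V Val) → Sys V Val → Fml V Val → Prop
  | Tm, _, Fml.eq v x => ∀ s ∈ Tm, s v = x
  | Tm, _, Fml.dep X Y => ∀ s ∈ Tm, ∀ t ∈ Tm, (∀ w ∈ X, s w = t w) → s Y = t Y
  | Tm, F, Fml.neg φ => ∀ s ∈ Tm, ¬ satC {s} F φ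
  | Tm, F, Fml.and φ ψ => satC Tm F φ ∧ satC Tm F ψ
  | Tm, F, Fml.or φ ψ => ∃ T1 T2 : Set (Asg V Val), T1 ∪ T2 = Tm ∧ satC T1 F φ ∧ satC T2 F ψ
  | Tm, F, Fml.ior φ ψ => satC Tm F φ ∨ satC Tm F ψ
  | Tm, F, Fml.cf I φ => IConsistent I → satC (doAsg F I '' Tm) (doSys F I) φ

/-- Satisfaction over generalized causal teams (the semantics `⊨^g`). -/
def satG : Set (Asg V Val × Sys V Val) → Fml V Val → Prop
  | T, Fml.eq v x => ∀ p ∈ T, p.1 v = x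
  | T, Fml.dep X Y => ∀ p ∈ T, ∀ q ∈ T, (∀ w ∈ X, p.1 w = q.1 w) → p.1 Y = q.1 Y
  | T, Fml.neg φ => ∀ p ∈ T, ¬ satG {p} φ
  | T, Fml.and φ ψ => satG T φ ∧ satG T ψ
  | T, Fml.or φ ψ => ∃ T1 T2 : Set (Asg V Val × Sys V Val), T1 ∪ T2 = T ∧ satG T1 φ ∧ satG T2 ψ
  | T, Fml.ior φ ψ => satG T φ ∨ satG T ψ
  | T, Fml.cf I φ => IConsistent I →
      satG ((fun p : Asg V Val × Sys V Val => (doAsg p.2 I p.1, doSys p.2 I)) '' T) φ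

/-- A generalized causal team: a set of pairs `(s, F)` with `s` compatible with `F`. -/
def GTOk (T : Set (Asg V Val × Sys V Val)) : Prop := ∀ p ∈ T, Compat p.2 p.1

/-- The falsum `⊥`, an abbreviation for `X=x ∧ ¬(X=x)`. -/
def fBot : Fml V Val :=
  Fml.and (Fml.eq (Classical.arbitrary V) (Classical.arbitrary (Val (Classical.arbitrary V))))
    (Fml.neg (Fml.eq (Classical.arbitrary V) (Classical.arbitrary (Val (Classical.arbitrary V)))))

/-- A canonical tautology. -/
def fTop : Fml V Val := Fml.neg fBot

/-- Finite conjunction of a list of formulas. -/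
def bigAnd : List (Fml V Val) → Fml V Val
  | [] => fTop
  | [φ] => φ
  | φ :: ψ :: rest => Fml.and φ (bigAnd (ψ :: rest))

/-- Finite tensor disjunction of a list of formulas. -/
def bigOr : List (Fml V Val) → Fml V Val
  | [] => fBot
  | [φ] => φ
  | φ :: ψ :: rest => Fml.or φ (bigOr (ψ :: rest))

/-- Finite intuitionistic disjunction of a list of formulas. -/
def bigIor : List (Fml V Val) → Fml V Val
  | [] => fBot
  | [φ] => φ
  | φ :: ψ :: rest => Fml.ior φ (bigIor (ψ :: rest))

/-- The conjunction of equations describing the restriction of the assignment `t`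
to the set `S` of variables. -/
def eqList (S : Finset V) (t : Asg V Val) : List ((v : V) × Val v) :=
  S.toList.map (fun w => ⟨w, t w⟩)

/-- The list of all assignments over the signature. -/
def allAsg : List (Asg V Val) := (Finset.univ : Finset (Asg V Val)).toList

/-- `η(v)`: for every tuple of values for the variables other than `v`, intervening
with those values forces `v` to take the value computed by `F.fn v` from the parents. -/
def eta (F : Sys V Val) (v : V) : Fml V Val :=
  bigAnd (allAsg.map (fun t =>
    Fml.cf (eqList (Finset.univ.erase v) t) (Fml.eq v (F.fn v (fun w _ => t w)))))

/-- `ξ(v)`: the value of `v` is unaffected by interventions on all other variables. -/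
def xi (v : V) : Fml V Val :=
  bigAnd ((Finset.univ : Finset (Val v)).toList.map (fun x =>
    bigAnd (allAsg.map (fun t =>
      Fml.or (Fml.neg (Fml.eq v x))
        (Fml.cf (eqList (Finset.univ.erase v) t) (Fml.eq v x))))))

/-- `Cn(F)`: the endogenous variables of `F` governed by a constant function. -/
def Cn (F : Sys V Val) : Finset V :=
  F.En.filter (fun v => ∃ c : Val v, ∀ p, F.fn v p = c)

/-- The non-constant endogenous variables `En(F) ∖ Cn(F)`. -/
def strictEn (F : Sys V Val) : Finset V := F.En \ Cn F

/-- `F_v ∼ G_v`: equivalence of the two functions for `v` up to dummy arguments. -/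
def SimFn (F G : Sys V Val) (v : V) : Prop :=
  ∀ (x : (w : V) → w ∈ F.pa v ∩ G.pa v → Val w)
    (y : (w : V) → w ∈ F.pa v \ G.pa v → Val w)
    (z : (w : V) → w ∈ G.pa v \ F.pa v → Val w),
    F.fn v (fun w hw =>
      if h : w ∈ G.pa v then x w (Finset.mem_inter.mpr ⟨hw, h⟩)
      else y w (Finset.mem_sdiff.mpr ⟨hw, h⟩)) =
    G.fn v (fun w hw =>
      if h : w ∈ F.pa v then x w (Finset.mem_inter.mpr ⟨h, hw⟩)
      else z w (Finset.mem_sdiff.mpr ⟨hw, h⟩))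

/-- `F ∼ G`: equivalence of systems of functions up to dummy arguments. -/
def Sim (F G : Sys V Val) : Prop :=
  strictEn F = strictEn G ∧ ∀ v ∈ strictEn F, SimFn F G v

/-- The CO[σ]-formula `Φ^F` characterizing the function component `F` up to `∼`. -/
def Phi (F : Sys V Val) : Fml V Val :=
  Fml.and (bigAnd (F.En.toList.map (fun v => eta F v)))
    (bigAnd ((((Finset.univ : Finset V) \ F.En) ∪ Cn F).toList.map (fun v => xi v)))

/-- The CO[σ]-formula `Θ^A`: the team component is included in `A`. -/
def Theta (A : Finset (Asg V Val)) : Fml V Val :=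
  bigOr (A.toList.map (fun s =>
    bigAnd ((Finset.univ : Finset V).toList.map (fun v => Fml.eq v (s v)))))

/-- `χ₁`: all variables are constant in the team. -/
def chi1 : Fml V Val :=
  bigAnd ((Finset.univ : Finset V).toList.map (fun v => Fml.dep [] v))

/-- `χ_k`: the team has at most `k` elements. -/
def chi : ℕ → Fml V Val
  | 0 => fBot
  | 1 => chi1
  | (k+2) => Fml.or chi1 (chi (k+1))

end CausalTeam

open CausalTeam

/-- The restriction `T^F` of a generalized causal team to members whose function
component is `∼`-equivalent to `F` (team component thereof). -/
def gRestrict {V : Type} [Fintype V] [DecidableEq V] [Nonempty V]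
    {Val : V → Type} [∀ v, Fintype (Val v)] [∀ v, DecidableEq (Val v)] [∀ v, Nonempty (Val v)]
    (T : Set (Asg V Val × Sys V Val)) (F : Sys V Val) : Set (Asg V Val) :=
  {s | ∃ G : Sys V Val, (s, G) ∈ T ∧ Sim G F}

namespace CausalTeam

variable {V : Type} [Fintype V] [DecidableEq V] [Nonempty V]
  {Val : V → Type} [∀ v, Fintype (Val v)] [∀ v, DecidableEq (Val v)] [∀ v, Nonempty (Val v)]

lemma simFn_iff (F G : Sys V Val) (v : V) :
    SimFn F G v ↔ ∀ t : Asg V Val, F.fn v (fun w _ => t w) = G.fn v (fun w _ => t w) := by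
  constructor
  · intro h t
    have := h (fun w _ => t w) (fun w _ => t w) (fun w _ => t w)
    have h1 : (fun (w : V) (hw : w ∈ F.pa v) =>
        if _ : w ∈ G.pa v then t w else t w) = (fun (w : V) (_ : w ∈ F.pa v) => t w) := by
      funext w hw; split <;> rfl
    have h2 : (fun (w : V) (hw : w ∈ G.pa v) =>
        if _ : w ∈ F.pa v then t w else t w) = (fun (w : V) (_ : w ∈ G.pa v) => t w) := by
      funext w hw; split <;> rfl
    simpa [h1, h2] using this
  · intro h x y z
    classical
    set t : Asg V Val := fun w =>
      if hw : w ∈ F.pa v ∩ G.pa v then x w hw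
      else if hw : w ∈ F.pa v \ G.pa v then y w hw
      else if hw : w ∈ G.pa v \ F.pa v then z w hw
      else Classical.arbitrary _ with ht
    have h1 : (fun (w : V) (hw : w ∈ F.pa v) =>
        if h : w ∈ G.pa v then x w (Finset.mem_inter.mpr ⟨hw, h⟩)
        else y w (Finset.mem_sdiff.mpr ⟨hw, h⟩)) = (fun (w : V) (_ : w ∈ F.pa v) => t w) := by
      funext w hw
      by_cases hg : w ∈ G.pa v
      · rw [dif_pos hg]
        simp only [ht]
        rw [dif_pos (Finset.mem_inter.mpr ⟨hw, hg⟩)]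
      · rw [dif_neg hg]
        simp only [ht]
        rw [dif_neg (fun hc => hg (Finset.mem_inter.mp hc).2),
          dif_pos (Finset.mem_sdiff.mpr ⟨hw, hg⟩)]
    have h2 : (fun (w : V) (hw : w ∈ G.pa v) =>
        if h : w ∈ F.pa v then x w (Finset.mem_inter.mpr ⟨h, hw⟩)
        else z w (Finset.mem_sdiff.mpr ⟨hw, h⟩)) = (fun (w : V) (_ : w ∈ G.pa v) => t w) := by
      funext w hw
      by_cases hf : w ∈ F.pa v
      · rw [dif_pos hf]
        simp only [ht]
        rw [dif_pos (Finset.mem_inter.mpr ⟨hf, hw⟩)]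
      · rw [dif_neg hf]
        simp only [ht]
        rw [dif_neg (fun hc => hf (Finset.mem_inter.mp hc).1),
          dif_neg (fun hc => hf (Finset.mem_sdiff.mp hc).1),
          dif_pos (Finset.mem_sdiff.mpr ⟨hw, hf⟩)]
    rw [h1, h2]
    exact h t

lemma sim_refl (F : Sys V Val) : Sim F F :=
  ⟨rfl, fun v _ => (simFn_iff F F v).mpr fun _ => rfl⟩

lemma sim_symm {F G : Sys V Val} (h : Sim F G) : Sim G F := by
  refine ⟨h.1.symm, fun v hv => (simFn_iff G F v).mpr fun t => ?_⟩
  have hv' : v ∈ strictEn F := by rw [h.1]; exact hv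
  exact ((simFn_iff F G v).mp (h.2 v hv') t).symm

lemma sim_trans {F G H : Sys V Val} (h1 : Sim F G) (h2 : Sim G H) : Sim F H := by
  refine ⟨h1.1.trans h2.1, fun v hv => (simFn_iff F H v).mpr fun t => ?_⟩
  have hv' : v ∈ strictEn G := by rw [← h1.1]; exact hv
  exact ((simFn_iff F G v).mp (h1.2 v hv) t).trans ((simFn_iff G H v).mp (h2.2 v hv') t)

lemma mem_strictEn {F : Sys V Val} {v : V} :
    v ∈ strictEn F ↔ v ∈ F.En ∧ ¬ ∃ c : Val v, ∀ p, F.fn v p = c := by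
  simp [strictEn, Cn, Finset.mem_sdiff, Finset.mem_filter]
  tauto

lemma strictEn_subset {F : Sys V Val} : strictEn F ⊆ F.En := Finset.sdiff_subset

lemma ilookup_none_iff (I : List ((v : V) × Val v)) (v : V) :
    ilookup I v = none ↔ v ∉ ikeys I := by
  induction I with
  | nil => simp [ilookup, ikeys]
  | cons p I ih =>
    by_cases h : p.1 = v
    · subst h; simp [ilookup, ikeys]
    · simp only [ilookup, dif_neg h, ih, ikeys, List.map_cons, List.mem_cons]
      constructor
      · intro hn hc
        rcases hc with hc | hc
        · exact h hc.symm
        · exact hn hc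
      · intro hn hc
        exact hn (Or.inr hc)

lemma doAsg_unfold (F : Sys V Val) (I : List ((v : V) × Val v)) (s : Asg V Val) (v : V) :
    doAsg F I s v = match ilookup I v with
      | some x => x
      | none => if h : v ∈ F.En then F.fn v (fun w _ => doAsg F I s w) else s v := by
  exact WellFounded.fix_eq _ _ v

lemma doAsg_some {F : Sys V Val} {I : List ((v : V) × Val v)} {s : Asg V Val} {v : V}
    {x : Val v} (h : ilookup I v = some x) : doAsg F I s v = x := by
  rw [doAsg_unfold, h]

lemma doAsg_none_en {F : Sys V Val} {I : List ((v : V) × Val v)} {s : Asg V Val} {v : V}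
    (h : ilookup I v = none) (hv : v ∈ F.En) :
    doAsg F I s v = F.fn v (fun w _ => doAsg F I s w) := by
  rw [doAsg_unfold, h]; exact dif_pos hv

lemma doAsg_none_ex {F : Sys V Val} {I : List ((v : V) × Val v)} {s : Asg V Val} {v : V}
    (h : ilookup I v = none) (hv : v ∉ F.En) : doAsg F I s v = s v := by
  rw [doAsg_unfold, h]; exact dif_neg hv

lemma doAsg_nonstrict {F : Sys V Val} {I : List ((v : V) × Val v)} {s : Asg V Val} {v : V}
    (h : ilookup I v = none) (hv : v ∉ strictEn F) (hc : Compat F s) :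
    doAsg F I s v = s v := by
  by_cases hen : v ∈ F.En
  · obtain ⟨c, hcc⟩ : ∃ c : Val v, ∀ p, F.fn v p = c := by
      by_contra hcon
      exact hv (mem_strictEn.mpr ⟨hen, hcon⟩)
    rw [doAsg_none_en h hen, hcc, ← hcc (fun w _ => s w), ← hc v hen]
  · exact doAsg_none_ex h hen
lemma doAsg_congr {F G : Sys V Val} (I : List ((v : V) × Val v)) {s : Asg V Val}
    (hF : Compat F s) (hG : Compat G s) (h : Sim F G) :
    doAsg F I s = doAsg G I s := by
  funext v
  induction v using (wfEdge F).induction with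
  | _ v ih =>
  rcases hlook : ilookup I v with _ | x
  · -- none
    by_cases hv : v ∈ strictEn F
    · have hvF : v ∈ F.En := strictEn_subset hv
      have hvG' : v ∈ strictEn G := by rw [← h.1]; exact hv
      have hvG : v ∈ G.En := strictEn_subset hvG'
      rw [doAsg_none_en hlook hvF, doAsg_none_en hlook hvG]
      have hfn := (simFn_iff F G v).mp (h.2 v hv)
      classical
      set t : Asg V Val := fun w => if w ∈ G.pa v then doAsg G I s w else doAsg F I s w
        with hts
      have h1 : (fun (w : V) (_ : w ∈ F.pa v) => doAsg F I s w) =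
          (fun (w : V) (_ : w ∈ F.pa v) => t w) := by
        funext w hw
        by_cases hg : w ∈ G.pa v
        · simp only [hts, if_pos hg]
          exact ih w ⟨hvF, hw⟩
        · simp only [hts, if_neg hg]
      have h2 : (fun (w : V) (_ : w ∈ G.pa v) => doAsg G I s w) =
          (fun (w : V) (_ : w ∈ G.pa v) => t w) := by
        funext w hw
        simp only [hts, if_pos hw]
      rw [h1, h2, hfn t]
    · have hv' : v ∉ strictEn G := by rw [← h.1]; exact hv
      rw [doAsg_nonstrict hlook hv hF, doAsg_nonstrict hlook hv' hG]
  · rw [doAsg_some hlook, doAsg_some hlook]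

lemma doAsg_compat (F : Sys V Val) (I : List ((v : V) × Val v)) (s : Asg V Val) :
    Compat (doSys F I) (doAsg F I s) := by
  intro v hv
  simp only [doSys, Finset.mem_filter] at hv
  have hlook : ilookup I v = none := (ilookup_none_iff I v).mpr hv.2
  exact doAsg_none_en hlook hv.1

lemma strictEn_doSys (F : Sys V Val) (I : List ((v : V) × Val v)) :
    strictEn (doSys F I) = (strictEn F).filter (fun v => v ∉ ikeys I) := by
  ext v
  have hE : (doSys F I).En = F.En.filter (fun v => v ∉ ikeys I) := rfl
  have hfn : (doSys F I).fn = F.fn := rfl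
  simp only [strictEn, Cn, hE, hfn, Finset.mem_sdiff, Finset.mem_filter]
  tauto

lemma sim_doSys {F G : Sys V Val} (h : Sim F G) (I : List ((v : V) × Val v)) :
    Sim (doSys F I) (doSys G I) := by
  constructor
  · rw [strictEn_doSys, strictEn_doSys, h.1]
  · intro v hv
    have hv' : v ∈ strictEn F := by
      rw [strictEn_doSys] at hv
      exact (Finset.mem_filter.mp hv).1
    exact (simFn_iff (doSys F I) (doSys G I) v).mpr
      ((simFn_iff F G v).mp (h.2 v hv'))
lemma satC_congr (φ : Fml V Val) :
    ∀ (Tm : Set (Asg V Val)) (F G : Sys V Val),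
      (∀ s ∈ Tm, Compat F s) → (∀ s ∈ Tm, Compat G s) → Sim F G →
      (satC Tm F φ ↔ satC Tm G φ) := by
  induction φ with
  | eq v x => intro Tm F G _ _ _; exact Iff.rfl
  | dep X Y => intro Tm F G _ _ _; exact Iff.rfl
  | neg φ ih =>
    intro Tm F G hF hG h
    simp only [satC]
    have key : ∀ s ∈ Tm, satC {s} F φ ↔ satC {s} G φ := fun s hs =>
      ih {s} F G (fun t ht => Set.mem_singleton_iff.mp ht ▸ hF s hs) (fun t ht => Set.mem_singleton_iff.mp ht ▸ hG s hs) h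
    exact forall₂_congr fun s hs => not_congr (key s hs)
  | and φ ψ ihφ ihψ =>
    intro Tm F G hF hG h
    exact and_congr (ihφ Tm F G hF hG h) (ihψ Tm F G hF hG h)
  | or φ ψ ihφ ihψ =>
    intro Tm F G hF hG h
    simp only [satC]
    constructor
    · rintro ⟨T1, T2, hu, h1, h2⟩
      have hsub1 : T1 ⊆ Tm := hu ▸ Set.subset_union_left
      have hsub2 : T2 ⊆ Tm := hu ▸ Set.subset_union_right
      exact ⟨T1, T2, hu,
        (ihφ T1 F G (fun s hs => hF s (hsub1 hs)) (fun s hs => hG s (hsub1 hs)) h).mp h1,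
        (ihψ T2 F G (fun s hs => hF s (hsub2 hs)) (fun s hs => hG s (hsub2 hs)) h).mp h2⟩
    · rintro ⟨T1, T2, hu, h1, h2⟩
      have hsub1 : T1 ⊆ Tm := hu ▸ Set.subset_union_left
      have hsub2 : T2 ⊆ Tm := hu ▸ Set.subset_union_right
      exact ⟨T1, T2, hu,
        (ihφ T1 F G (fun s hs => hF s (hsub1 hs)) (fun s hs => hG s (hsub1 hs)) h).mpr h1,
        (ihψ T2 F G (fun s hs => hF s (hsub2 hs)) (fun s hs => hG s (hsub2 hs)) h).mpr h2⟩
  | ior φ ψ ihφ ihψ =>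
    intro Tm F G hF hG h
    exact or_congr (ihφ Tm F G hF hG h) (ihψ Tm F G hF hG h)
  | cf I φ ih =>
    intro Tm F G hF hG h
    simp only [satC]
    refine imp_congr_right fun _ => ?_
    have himg : doAsg F I '' Tm = doAsg G I '' Tm :=
      Set.image_congr fun s hs => doAsg_congr I (hF s hs) (hG s hs) h
    rw [himg]
    refine ih _ (doSys F I) (doSys G I) ?_ ?_ (sim_doSys h I)
    · rintro t ⟨s, hs, rfl⟩
      rw [← doAsg_congr I (hF s hs) (hG s hs) h]
      exact doAsg_compat F I s
    · rintro t ⟨s, hs, rfl⟩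
      exact doAsg_compat G I s
end CausalTeam
section GenAux

variable {V : Type} [Fintype V] [DecidableEq V] [Nonempty V]
  {Val : V → Type} [∀ v, Fintype (Val v)] [∀ v, DecidableEq (Val v)] [∀ v, Nonempty (Val v)]

lemma gRestrict_witness {T S : Set (Asg V Val × Sys V Val)}
    (hres : ∀ F, gRestrict T F = gRestrict S F) {s : Asg V Val} {G : Sys V Val}
    (h : (s, G) ∈ S) : ∃ H, (s, H) ∈ T ∧ Sim H G := by
  have : s ∈ gRestrict T G := by
    rw [hres G]; exact ⟨G, h, sim_refl G⟩
  exact this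

lemma gRestrict_singleton_subset {s : Asg V Val} {G H F : Sys V Val} (h : Sim G H) :
    gRestrict ({(s, G)} : Set (Asg V Val × Sys V Val)) F ⊆
      gRestrict ({(s, H)} : Set (Asg V Val × Sys V Val)) F := by
  rintro t ⟨G', hG', hsim⟩
  have heq := Set.mem_singleton_iff.mp hG'
  have h1 : t = s := congrArg Prod.fst heq
  have h2 : G' = G := congrArg Prod.snd heq
  refine ⟨H, ?_, sim_trans (sim_symm h) (h2 ▸ hsim)⟩
  rw [h1]
  rfl

lemma gRestrict_singleton_eq {s : Asg V Val} {G H : Sys V Val} (h : Sim G H) (F : Sys V Val) :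
    gRestrict ({(s, G)} : Set (Asg V Val × Sys V Val)) F =
      gRestrict ({(s, H)} : Set (Asg V Val × Sys V Val)) F :=
  Set.Subset.antisymm (gRestrict_singleton_subset h) (gRestrict_singleton_subset (sim_symm h))

lemma GTOk_singleton {s : Asg V Val} {G : Sys V Val} (h : Compat G s) :
    GTOk ({(s, G)} : Set (Asg V Val × Sys V Val)) := by
  rintro p hp
  rw [Set.mem_singleton_iff] at hp
  rw [hp]
  exact h

lemma GTOk_image {T : Set (Asg V Val × Sys V Val)} (I : List ((v : V) × Val v)) :
    GTOk ((fun p : Asg V Val × Sys V Val => (doAsg p.2 I p.1, doSys p.2 I)) '' T) := by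
  rintro p ⟨⟨s, G⟩, _, rfl⟩
  exact doAsg_compat G I s

lemma gRestrict_image_subset {T S : Set (Asg V Val × Sys V Val)} (hT : GTOk T) (hS : GTOk S)
    (hres : ∀ F, gRestrict T F = gRestrict S F) (I : List ((v : V) × Val v)) (F : Sys V Val) :
    gRestrict ((fun p : Asg V Val × Sys V Val => (doAsg p.2 I p.1, doSys p.2 I)) '' T) F ⊆
      gRestrict ((fun p : Asg V Val × Sys V Val => (doAsg p.2 I p.1, doSys p.2 I)) '' S) F := by
  rintro s' ⟨G', hG'mem, hsim⟩
  obtain ⟨⟨s, G⟩, hmem, heq⟩ := hG'mem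
  have hs' : s' = doAsg G I s := (congrArg Prod.fst heq).symm
  have hG' : G' = doSys G I := (congrArg Prod.snd heq).symm
  obtain ⟨G2, hG2S, hsim2⟩ : ∃ G2, (s, G2) ∈ S ∧ Sim G2 G :=
    gRestrict_witness (fun F => (hres F).symm) hmem
  have hda : doAsg G2 I s = doAsg G I s := doAsg_congr I (hS _ hG2S) (hT _ hmem) hsim2
  refine ⟨doSys G2 I, ⟨⟨(s, G2), hG2S, ?_⟩, sim_trans (sim_doSys hsim2 I) (hG' ▸ hsim)⟩⟩
  show (doAsg G2 I s, doSys G2 I) = (s', doSys G2 I)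
  rw [hda, hs']

lemma satG_mono (φ : Fml V Val) :
    ∀ T S : Set (Asg V Val × Sys V Val), GTOk T → GTOk S →
      (∀ F, gRestrict T F = gRestrict S F) → satG T φ → satG S φ := by
  induction φ with
  | eq v x =>
    intro T S hT hS hres hsat p hp
    obtain ⟨H, hHT, _⟩ := gRestrict_witness hres (show (p.1, p.2) ∈ S from hp)
    exact hsat (p.1, H) hHT
  | dep X Y =>
    intro T S hT hS hres hsat p hp q hq hXY
    obtain ⟨Hp, hpT, _⟩ := gRestrict_witness hres (show (p.1, p.2) ∈ S from hp)
    obtain ⟨Hq, hqT, _⟩ := gRestrict_witness hres (show (q.1, q.2) ∈ S from hq)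
    exact hsat (p.1, Hp) hpT (q.1, Hq) hqT hXY
  | neg φ ih =>
    intro T S hT hS hres hsat p hp hcon
    obtain ⟨H, hHT, hsimH⟩ := gRestrict_witness hres (show (p.1, p.2) ∈ S from hp)
    refine hsat (p.1, H) hHT ?_
    refine ih {p} {(p.1, H)} (GTOk_singleton (hS p hp)) (GTOk_singleton (hT _ hHT)) ?_ hcon
    intro F
    exact gRestrict_singleton_eq (sim_symm hsimH) F
  | and φ ψ ihφ ihψ =>
    intro T S hT hS hres hsat
    exact ⟨ihφ T S hT hS hres hsat.1, ihψ T S hT hS hres hsat.2⟩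
  | or φ ψ ihφ ihψ =>
    intro T S hT hS hres hsat
    obtain ⟨T1, T2, hu, h1, h2⟩ := hsat
    classical
    refine ⟨{q ∈ S | ∃ H, (q.1, H) ∈ T1 ∧ Sim H q.2},
      {q ∈ S | ∃ H, (q.1, H) ∈ T2 ∧ Sim H q.2}, ?_, ?_, ?_⟩
    · apply Set.Subset.antisymm
      · rintro q (⟨hq, _⟩ | ⟨hq, _⟩) <;> exact hq
      · intro q hq
        obtain ⟨H, hHT, hsimH⟩ := gRestrict_witness hres (show (q.1, q.2) ∈ S from hq)
        rw [← hu] at hHT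
        rcases hHT with hHT | hHT
        · exact Or.inl ⟨hq, H, hHT, hsimH⟩
        · exact Or.inr ⟨hq, H, hHT, hsimH⟩
    · refine ihφ T1 _ (fun p hp => hT p (hu ▸ Set.mem_union_left T2 hp))
        (fun p hp => hS p hp.1) ?_ h1
      intro F
      apply Set.Subset.antisymm
      · rintro s ⟨H, hHT1, hHF⟩
        have hsT : s ∈ gRestrict T H := ⟨H, hu ▸ Set.mem_union_left T2 hHT1, sim_refl H⟩
        rw [hres H] at hsT
        obtain ⟨G, hGS, hGH⟩ := hsT
        exact ⟨G, ⟨hGS, H, hHT1, sim_symm hGH⟩, sim_trans hGH hHF⟩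
      · rintro s ⟨G, ⟨hGS, H, hHT1, hHG⟩, hGF⟩
        exact ⟨H, hHT1, sim_trans hHG hGF⟩
    · refine ihψ T2 _ (fun p hp => hT p (hu ▸ Set.mem_union_right T1 hp))
        (fun p hp => hS p hp.1) ?_ h2
      intro F
      apply Set.Subset.antisymm
      · rintro s ⟨H, hHT2, hHF⟩
        have hsT : s ∈ gRestrict T H := ⟨H, hu ▸ Set.mem_union_right T1 hHT2, sim_refl H⟩
        rw [hres H] at hsT
        obtain ⟨G, hGS, hGH⟩ := hsT
        exact ⟨G, ⟨hGS, H, hHT2, sim_symm hGH⟩, sim_trans hGH hHF⟩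
      · rintro s ⟨G, ⟨hGS, H, hHT2, hHG⟩, hGF⟩
        exact ⟨H, hHT2, sim_trans hHG hGF⟩
  | ior φ ψ ihφ ihψ =>
    intro T S hT hS hres hsat
    rcases hsat with h | h
    · exact Or.inl (ihφ T S hT hS hres h)
    · exact Or.inr (ihψ T S hT hS hres h)
  | cf I φ ih =>
    intro T S hT hS hres hsat hcon
    refine ih _ _ (GTOk_image I) (GTOk_image I) ?_ (hsat hcon)
    intro F
    exact Set.Subset.antisymm (gRestrict_image_subset hT hS hres I F)
      (gRestrict_image_subset hS hT (fun F => (hres F).symm) I F)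

end GenAux

/-- **Closure under causal equivalence**: equivalent (generalized) causal teams satisfy
the same CO⩗[σ]- and COD[σ]-formulas. -/
theorem closure_under_causal_equivalence {V : Type} [Fintype V] [DecidableEq V] [Nonempty V]
    {Val : V → Type} [∀ v, Fintype (Val v)] [∀ v, DecidableEq (Val v)] [∀ v, Nonempty (Val v)]
    (φ : Fml V Val) (hφ : IsCOV φ ∨ IsCOD φ) :
    (∀ (Tm Sm : Set (Asg V Val)) (F G : Sys V Val),
        (∀ s ∈ Tm, Compat F s) → (∀ s ∈ Sm, Compat G s) →
        Tm = Sm ∧ Sim F G → (satC Tm F φ ↔ satC Sm G φ)) ∧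
    (∀ T S : Set (Asg V Val × Sys V Val), GTOk T → GTOk S →
        (∀ F : Sys V Val, gRestrict T F = gRestrict S F) → (satG T φ ↔ satG S φ)) := by
  constructor
  · rintro Tm Sm F G hF hG ⟨rfl, hsim⟩
    exact satC_congr φ Tm F G hF hG hsim
  · intro T S hT hS hres
    exact ⟨satG_mono φ T S hT hS hres,
      satG_mono φ S T hS hT (fun F => (hres F).symm)⟩
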